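/- If a bidimensional infinite word w : ℕ² → A is URD, then every row n ↦ (w(k, n))_{k∈ℕ} and every column m ↦ (w(m, k))_{k∈ℕ} of w is a uniformly recurrent unidimensional word. -/
import Mathlib


/-- A unidimensional infinite word is uniformly recurrent if for every length `n`
there is a bound `b` such that every length-`b` factor contains every length-`n` factor. -/
def UniformlyRecurrent {A : Type*} (w : ℕ → A) : Prop :=
  ∀ n : ℕ, ∃ b : ℕ, ∀ p m : ℕ, ∃ k : ℕ,
    m ≤ k ∧ k + n ≤ m + b ∧ ∀ j < n, w (k + j) = w (p + j)

/-- The word along direction `q` with respect to size `s` in the `d`-dimensional word `w`: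
its `ℓ`-th letter is the block of size `s` at position `ℓ • q`. -/
def dirWord {d : ℕ} {A : Type*} (w : (Fin d → ℕ) → A) (q s : Fin d → ℕ) :
    ℕ → ({i : Fin d → ℕ // ∀ j, i j < s j} → A) :=
  fun ℓ i => w (fun j => i.1 j + ℓ * q j)

/-- Uniformly recurrent along all directions. -/
def IsURD {d : ℕ} {A : Type*} (w : (Fin d → ℕ) → A) : Prop :=
  ∀ s q : Fin d → ℕ, Finset.univ.gcd q = 1 →
    ∃ b : ℕ, ∀ m : ℕ, ∃ k : ℕ, m ≤ k ∧ k < m + b ∧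
      dirWord w q s k = dirWord w q s 0

/-- Strongly uniformly recurrent along all directions: the bound depends only on the size. -/
def IsSURD {d : ℕ} {A : Type*} (w : (Fin d → ℕ) → A) : Prop :=
  ∀ s : Fin d → ℕ, ∃ b : ℕ, ∀ q : Fin d → ℕ, Finset.univ.gcd q = 1 →
    ∀ m : ℕ, ∃ k : ℕ, m ≤ k ∧ k < m + b ∧
      dirWord w q s k = dirWord w q s 0

/-- Super strongly uniformly recurrent along all directions from any origin. -/
def IsSSURDO {d : ℕ} {A : Type*} (w : (Fin d → ℕ) → A) : Prop :=
  ∀ s : Fin d → ℕ, ∃ b : ℕ, ∀ q : Fin d → ℕ, Finset.univ.gcd q = 1 →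
    ∀ p : Fin d → ℕ, ∀ m : ℕ, ∃ k : ℕ, m ≤ k ∧ k < m + b ∧
      dirWord (fun i => w (fun j => i j + p j)) q s k =
        dirWord (fun i => w (fun j => i j + p j)) q s 0

/-- Uniform recurrence for `d`-dimensional words: every prefix of size `s` occurs
in every factor of size `(b,…,b)`. -/
def IsUR {d : ℕ} {A : Type*} (w : (Fin d → ℕ) → A) : Prop :=
  ∀ s : Fin d → ℕ, ∃ b : ℕ, ∀ p : Fin d → ℕ, ∃ r : Fin d → ℕ,
    (∀ j, p j ≤ r j ∧ r j + s j ≤ p j + b) ∧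
    ∀ i : Fin d → ℕ, (∀ j, i j < s j) → w (fun j => r j + i j) = w i

lemma aux_ur {A : Type*} [Finite A] (u : ℕ → A)
    (h : ∀ L : ℕ, ∃ b : ℕ, ∀ m : ℕ, ∃ k : ℕ, m ≤ k ∧ k < m + b ∧ ∀ j < L, u (k + j) = u j) :
    UniformlyRecurrent u := by
  have : Fintype A := Fintype.ofFinite A
  intro n
  classical
  choose bf hbf using h
  set C : (Fin n → A) → ℕ := fun v =>
    if hv : ∃ p, (fun j : Fin n => u (p + j)) = v then
      bf (hv.choose + n) + hv.choose + n else 0 with hC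
  refine ⟨Finset.univ.sup C, fun p m => ?_⟩
  set v : Fin n → A := fun j => u (p + j) with hv
  have hex : ∃ p', (fun j : Fin n => u (p' + j)) = v := ⟨p, rfl⟩
  set p₀ := hex.choose with hp0
  have hp₀ : (fun j : Fin n => u (p₀ + j)) = v := hex.choose_spec
  obtain ⟨k, hk1, hk2, hk3⟩ := hbf (p₀ + n) m
  refine ⟨k + p₀, le_trans hk1 (Nat.le_add_right _ _), ?_, ?_⟩
  · have hCv : C v = bf (p₀ + n) + p₀ + n := by rw [hC]; simp only; rw [dif_pos hex]
    have hsup : C v ≤ Finset.univ.sup C := Finset.le_sup (Finset.mem_univ v)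
    omega
  · intro j hj
    have h1 : u (k + (p₀ + j)) = u (p₀ + j) := hk3 (p₀ + j) (by omega)
    have h2 : u (p₀ + j) = u (p + j) := by
      have := congrFun hp₀ ⟨j, hj⟩
      simpa [hv] using this
    rw [Nat.add_assoc, h1, h2]

lemma aux_pref {A : Type*} (w : (Fin 2 → ℕ) → A) (hw : IsURD w) (n L : ℕ) :
    (∃ b : ℕ, ∀ m : ℕ, ∃ k : ℕ, m ≤ k ∧ k < m + b ∧
      ∀ j < L, w ![k + j, n] = w ![j, n]) ∧
    (∃ b : ℕ, ∀ m : ℕ, ∃ k : ℕ, m ≤ k ∧ k < m + b ∧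
      ∀ j < L, w ![n, k + j] = w ![n, j]) := by
  constructor
  · obtain ⟨b, hb⟩ := hw ![L, n + 1] ![1, 0] (by decide)
    refine ⟨b, fun m => ?_⟩
    obtain ⟨k, hk1, hk2, hk3⟩ := hb m
    refine ⟨k, hk1, hk2, fun j hj => ?_⟩
    have hi : ∀ j' : Fin 2, (![j, n] : Fin 2 → ℕ) j' < ![L, n + 1] j' := by
      intro j'; fin_cases j' <;> simp [hj]
    have := congrFun hk3 ⟨![j, n], hi⟩
    simp only [dirWord] at this
    convert this using 2 <;> funext j' <;> fin_cases j' <;> simp <;> ring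
  · obtain ⟨b, hb⟩ := hw ![n + 1, L] ![0, 1] (by decide)
    refine ⟨b, fun m => ?_⟩
    obtain ⟨k, hk1, hk2, hk3⟩ := hb m
    refine ⟨k, hk1, hk2, fun j hj => ?_⟩
    have hi : ∀ j' : Fin 2, (![n, j] : Fin 2 → ℕ) j' < ![n + 1, L] j' := by
      intro j'; fin_cases j' <;> simp [hj]
    have := congrFun hk3 ⟨![n, j], hi⟩
    simp only [dirWord] at this
    convert this using 2 <;> funext j' <;> fin_cases j' <;> simp <;> ring

theorem stmt_10 {A : Type*} [Finite A] (w : (Fin 2 → ℕ) → A) (hw : IsURD w) :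
    (∀ n : ℕ, UniformlyRecurrent (fun k => w ![k, n])) ∧
    (∀ m : ℕ, UniformlyRecurrent (fun k => w ![m, k])) := by
  constructor
  · intro n
    exact aux_ur _ (fun L => (aux_pref w hw n L).1)
  · intro m
    exact aux_ur _ (fun L => (aux_pref w hw m L).2)
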